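/- Let m be an odd positive integer, F = GF(2^m), N = 2^m, and r ≥ 0. For a tuple a = (a₀,...,a_r) ∈ F^{r+1} write P_a = Σ_{t=0}^r P^t(a_t), and for a binary m-tuple b define the column vector φ_{a,b} ∈ ℂ^N with entries φ_{a,b}(x) = N^{-1/2}·i^{x P_a xᵀ + 2 b xᵀ}, indexed by binary m-tuples x, where the exponent is computed in ℤ₄. Then the N×2^{(r+2)m} matrix Φ with these columns is a tight frame with redundancy 2^{(r+1)m}: Φ Φ† = 2^{(r+1)m}·I_N, i.e. Σ_{a ∈ F^{r+1}} Σ_{b ∈ F₂^m} φ_{a,b}(x)·conj(φ_{a,b}(y)) = 2^{(r+1)m} if x = y and 0 otherwise. Moreover, for each fixed a, the 2^m columns {φ_{a,b} : b ∈ F₂^m} form an orthonormal basis of ℂ^N. -/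

import Mathlib

noncomputable section

namespace DGPaper

/-- The absolute trace `GF(2^m) → 𝔽₂`. -/
def tr {m : ℕ} (x : GaloisField 2 m) : ZMod 2 :=
  Algebra.trace (ZMod 2) (GaloisField 2 m) x

/-- Lift a bit to `ℤ₄`. -/
def lift2 (v : ZMod 2) : ZMod 4 := (v.val : ZMod 4)

/-- `i^v` for `v ∈ ℤ₄`. -/
def zeta (v : ZMod 4) : ℂ := Complex.I ^ v.val

/-- The field element of `GF(2^m)` associated to a binary `m`-tuple via the basis
`1, ξ, …, ξ^{m-1}`. -/
def fld {m : ℕ} (ξ : GaloisField 2 m) (x : Fin m → ZMod 2) : GaloisField 2 m :=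
  ∑ j : Fin m, x j • ξ ^ (j : ℕ)

/-- The binary symmetric matrix `P^t(a)`: for `t = 0` it represents the bilinear form
`(x,y) ↦ Tr(x y a)`, and for `t ≥ 1` the (zero-diagonal) form
`(x,y) ↦ Tr((x y^{2^t} + x^{2^t} y) a)`, in the basis `1, ξ, …, ξ^{m-1}` of `GF(2^m)`
over `𝔽₂`. -/
def Pmat {m : ℕ} (ξ : GaloisField 2 m) (t : ℕ) (a : GaloisField 2 m) :
    Matrix (Fin m) (Fin m) (ZMod 2) :=
  Matrix.of fun i j =>
    if t = 0 then tr (ξ ^ (i : ℕ) * ξ ^ (j : ℕ) * a)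
    else tr ((ξ ^ (i : ℕ) * (ξ ^ (j : ℕ)) ^ (2 ^ t) + (ξ ^ (i : ℕ)) ^ (2 ^ t) * ξ ^ (j : ℕ)) * a)

/-- The quadratic form `x P xᵀ` evaluated in `ℤ₄` (the `0/1` entries of `P` and `x`
being lifted to `ℤ₄`). -/
def qform {m : ℕ} (P : Matrix (Fin m) (Fin m) (ZMod 2)) (x : Fin m → ZMod 2) : ZMod 4 :=
  ∑ i : Fin m, ∑ j : Fin m, lift2 (x i) * lift2 (P i j) * lift2 (x j)

instance {m : ℕ} : Fintype (GaloisField 2 m) := Fintype.ofFinite _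

/-- The column `φ_{a,b}` of the Delsarte–Goethals frame: its entry at the binary
`m`-tuple `x` is `2^{-m/2} i^{x P_a xᵀ + 2 b xᵀ}`, where `P_a = ∑_{t=0}^r P^t(a_t)` and
the exponent is computed in `ℤ₄`. -/
def dgFrameCol {m : ℕ} (ξ : GaloisField 2 m) (r : ℕ)
    (a : Fin (r + 1) → GaloisField 2 m) (b : Fin m → ZMod 2)
    (x : Fin m → ZMod 2) : ℂ :=
  (Real.sqrt (2 ^ m) : ℂ)⁻¹ *
    zeta (qform (∑ t : Fin (r + 1), Pmat ξ (t : ℕ) (a t)) x +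
      2 * ∑ j : Fin m, lift2 (b j) * lift2 (x j))

/-- A vector of `ℂ^{𝔽₂^m}` viewed in the euclidean space `EuclideanSpace ℂ (𝔽₂^m)`. -/
def toEuc {m : ℕ} (f : (Fin m → ZMod 2) → ℂ) : EuclideanSpace ℂ (Fin m → ZMod 2) :=
  (WithLp.equiv 2 ((Fin m → ZMod 2) → ℂ)).symm f

section Aux

lemma I_pow_mod (k : ℕ) : Complex.I ^ k = Complex.I ^ (k % 4) := by
  conv_lhs => rw [← Nat.div_add_mod k 4]
  rw [pow_add, pow_mul, Complex.I_pow_four, one_pow, one_mul]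

lemma I_pow_eq {a b : ℕ} (h : a % 4 = b % 4) : Complex.I ^ a = Complex.I ^ b := by
  rw [I_pow_mod a, I_pow_mod b, h]

lemma zeta_add (u v : ZMod 4) : zeta (u + v) = zeta u * zeta v := by
  unfold zeta
  rw [← pow_add]
  exact I_pow_eq (by rw [ZMod.val_add]; omega)

lemma conj_zeta (v : ZMod 4) : (starRingEnd ℂ) (zeta v) = zeta (-v) := by
  unfold zeta
  rw [map_pow, Complex.conj_I, show (-Complex.I) = Complex.I ^ 3 by
    rw [pow_succ, Complex.I_sq]; ring, ← pow_mul]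
  exact I_pow_eq (by revert v; decide)

def chi (s : ZMod 2) : ℂ := if s = 0 then 1 else -1

lemma zeta_two_lift2 (s : ZMod 2) : zeta (2 * lift2 s) = chi s := by
  rcases (by decide : ∀ s : ZMod 2, s = 0 ∨ s = 1) s with h | h <;> subst h
  · rw [show (2 * lift2 0 : ZMod 4) = 0 by decide]; simp [zeta, chi]
  · rw [show (2 * lift2 1 : ZMod 4) = 2 by decide, show chi 1 = -1 by simp [chi]]
    rw [zeta, show ((2 : ZMod 4)).val = 2 by decide, Complex.I_sq]

lemma chi_add (u v : ZMod 2) : chi (u + v) = chi u * chi v := by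
  rcases (by decide : ∀ s : ZMod 2, s = 0 ∨ s = 1) u with h | h <;>
  rcases (by decide : ∀ s : ZMod 2, s = 0 ∨ s = 1) v with h' | h' <;>
    subst h <;> subst h' <;> simp [chi, show ((1:ZMod 2) + 1) = 0 by decide]

lemma lift2_mul (u v : ZMod 2) : lift2 u * lift2 v = lift2 (u * v) := by revert u v; decide

lemma neg_two_lift2 (s : ZMod 2) : -(2 * lift2 s) = 2 * lift2 s := by revert s; decide

def hom2 : ZMod 2 →+ ZMod 4 where
  toFun s := 2 * lift2 s
  map_zero' := by decide
  map_add' := by decide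

lemma two_lift2_sum {ι : Type*} (s : Finset ι) (f : ι → ZMod 2) :
    2 * lift2 (∑ j ∈ s, f j) = ∑ j ∈ s, 2 * lift2 (f j) := map_sum hom2 f s

lemma char_sum {m : ℕ} (c : Fin m → ZMod 2) :
    ∑ b : Fin m → ZMod 2, chi (∑ j, b j * c j) =
      if c = 0 then (2 : ℂ) ^ m else 0 := by
  by_cases hc : c = 0
  · subst hc
    simp [chi, Finset.card_univ, Fintype.card_fun]
  · rw [if_neg hc]
    obtain ⟨j0, hj0⟩ : ∃ j, c j ≠ 0 := by
      by_contra h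
      push_neg at h
      exact hc (funext fun j => h j)
    have hcj : c j0 = 1 := by
      rcases (by decide : ∀ s : ZMod 2, s = 0 ∨ s = 1) (c j0) with h | h
      · exact absurd h hj0
      · exact h
    set e : Fin m → ZMod 2 := fun j => if j = j0 then 1 else 0 with he
    have key : ∀ b : Fin m → ZMod 2,
        (∑ j, (b + e) j * c j) = (∑ j, b j * c j) + 1 := by
      intro b
      simp only [Pi.add_apply, add_mul, Finset.sum_add_distrib]
      congr 1
      rw [show (∑ j, e j * c j) = c j0 by
        simp [he, ite_mul, Finset.sum_ite_eq']]
      exact hcj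
    have hS : (∑ b : Fin m → ZMod 2, chi (∑ j, b j * c j)) =
        -∑ b : Fin m → ZMod 2, chi (∑ j, b j * c j) := by
      have step : ∀ b : Fin m → ZMod 2, chi (∑ j, (b + e) j * c j) =
          -chi (∑ j, b j * c j) := by
        intro b
        rw [key b, chi_add]
        simp [chi]
      calc (∑ b : Fin m → ZMod 2, chi (∑ j, b j * c j))
          = ∑ b : Fin m → ZMod 2, chi (∑ j, (b + e) j * c j) :=
            (Fintype.sum_equiv (Equiv.addRight e)
              (fun b => chi (∑ j, (b + e) j * c j))
              (fun b => chi (∑ j, b j * c j)) (fun b => rfl)).symm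
        _ = -∑ b : Fin m → ZMod 2, chi (∑ j, b j * c j) := by
            rw [← Finset.sum_neg_distrib]
            exact Finset.sum_congr rfl fun b _ => step b
    have h2 : (2 : ℂ) * ∑ b : Fin m → ZMod 2, chi (∑ j, b j * c j) = 0 := by
      linear_combination hS
    have := mul_eq_zero.mp h2
    simpa using this

lemma two_lift2_add (u v : ZMod 2) :
    2 * lift2 (u + v) = 2 * lift2 u + 2 * lift2 v := by revert u v; decide

lemma sqrt_inv_mul (m : ℕ) :
    ((Real.sqrt (2 ^ m) : ℂ))⁻¹ * ((Real.sqrt (2 ^ m) : ℂ))⁻¹ = ((2 : ℂ) ^ m)⁻¹ := by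
  rw [← mul_inv]
  congr 1
  have h : Real.sqrt (2 ^ m) * Real.sqrt (2 ^ m) = 2 ^ m :=
    Real.mul_self_sqrt (by positivity)
  calc ((Real.sqrt (2 ^ m) : ℝ) : ℂ) * ((Real.sqrt (2 ^ m) : ℝ) : ℂ)
      = ((Real.sqrt (2 ^ m) * Real.sqrt (2 ^ m) : ℝ) : ℂ) := by push_cast; ring
    _ = (2 : ℂ) ^ m := by rw [h]; push_cast; ring

lemma two_B {m : ℕ} (b x : Fin m → ZMod 2) :
    (2 : ZMod 4) * ∑ j, lift2 (b j) * lift2 (x j) = 2 * lift2 (∑ j, b j * x j) := by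
  rw [two_lift2_sum, Finset.mul_sum]
  exact Finset.sum_congr rfl fun j _ => by rw [lift2_mul]

lemma pi_add_eq_zero_iff {m : ℕ} (x y : Fin m → ZMod 2) : x + y = 0 ↔ x = y := by
  constructor
  · intro h
    funext j
    have := congrFun h j
    revert this
    rcases (by decide : ∀ s : ZMod 2, s = 0 ∨ s = 1) (x j) with h1 | h1 <;>
    rcases (by decide : ∀ s : ZMod 2, s = 0 ∨ s = 1) (y j) with h2 | h2 <;>
      simp [h1, h2] <;> decide
  · rintro rfl
    funext j
    rcases (by decide : ∀ s : ZMod 2, s = 0 ∨ s = 1) (x j) with h1 | h1 <;> simp [h1] <;> decide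

lemma col_mul_conj {m : ℕ} (ξ : GaloisField 2 m) (r : ℕ)
    (a : Fin (r + 1) → GaloisField 2 m) (b x y : Fin m → ZMod 2) :
    dgFrameCol ξ r a b x * (starRingEnd ℂ) (dgFrameCol ξ r a b y) =
      ((2 : ℂ) ^ m)⁻¹ *
        (zeta (qform (∑ t : Fin (r + 1), Pmat ξ (t : ℕ) (a t)) x -
            qform (∑ t : Fin (r + 1), Pmat ξ (t : ℕ) (a t)) y) *
          chi (∑ j, b j * (x j + y j))) := by
  unfold dgFrameCol
  set Q := qform (∑ t : Fin (r + 1), Pmat ξ (t : ℕ) (a t)) with hQ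
  rw [map_mul, map_inv₀, Complex.conj_ofReal, conj_zeta]
  rw [mul_mul_mul_comm, sqrt_inv_mul, ← zeta_add]
  congr 1
  rw [← zeta_two_lift2 (∑ j, b j * (x j + y j)), ← zeta_add]
  congr 1
  rw [two_B, two_B]
  have h1 : -(Q y + 2 * lift2 (∑ j, b j * y j)) =
      -Q y + 2 * lift2 (∑ j, b j * y j) := by
    rw [neg_add, neg_two_lift2]
  rw [h1]
  have h2 : 2 * lift2 (∑ j, b j * (x j + y j)) =
      2 * lift2 (∑ j, b j * x j) + 2 * lift2 (∑ j, b j * y j) := by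
    have h3 : (∑ j, b j * (x j + y j)) = (∑ j, b j * x j) + (∑ j, b j * y j) := by
      rw [← Finset.sum_add_distrib]
      exact Finset.sum_congr rfl fun j _ => mul_add _ _ _
    rw [h3, two_lift2_add]
  rw [h2, sub_eq_add_neg]
  ring

lemma conj_col_mul {m : ℕ} (ξ : GaloisField 2 m) (r : ℕ)
    (a : Fin (r + 1) → GaloisField 2 m) (b b' x : Fin m → ZMod 2) :
    (starRingEnd ℂ) (dgFrameCol ξ r a b x) * dgFrameCol ξ r a b' x =
      ((2 : ℂ) ^ m)⁻¹ * chi (∑ j, x j * (b j + b' j)) := by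
  unfold dgFrameCol
  set Q := qform (∑ t : Fin (r + 1), Pmat ξ (t : ℕ) (a t)) with hQ
  rw [map_mul, map_inv₀, Complex.conj_ofReal, conj_zeta]
  rw [mul_mul_mul_comm, sqrt_inv_mul, ← zeta_add]
  congr 1
  rw [← zeta_two_lift2 (∑ j, x j * (b j + b' j))]
  congr 1
  rw [two_B, two_B]
  have h1 : -(Q x + 2 * lift2 (∑ j, b j * x j)) =
      -Q x + 2 * lift2 (∑ j, b j * x j) := by
    rw [neg_add, neg_two_lift2]
  have h2 : 2 * lift2 (∑ j, x j * (b j + b' j)) =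
      2 * lift2 (∑ j, b j * x j) + 2 * lift2 (∑ j, b' j * x j) := by
    have h3 : (∑ j, x j * (b j + b' j)) = (∑ j, b j * x j) + (∑ j, b' j * x j) := by
      rw [← Finset.sum_add_distrib]
      exact Finset.sum_congr rfl fun j _ => by ring
    rw [h3, two_lift2_add]
  rw [h1, h2]
  ring


lemma zeta_zero : zeta 0 = 1 := by simp [zeta]

lemma card_GF (m : ℕ) (hm0 : 0 < m) : Fintype.card (GaloisField 2 m) = 2 ^ m := by
  rw [← Nat.card_eq_fintype_card]
  exact GaloisField.card 2 m hm0.ne'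

end Aux

/-- The Delsarte–Goethals frame, whose `2^{(r+2)m}` columns are the
vectors `φ_{a,b}`, is a tight frame with redundancy `2^{(r+1)m}`:
`∑_{a,b} φ_{a,b}(x) conj(φ_{a,b}(y))` equals `2^{(r+1)m}` if `x = y` and `0` otherwise.
Moreover, for each fixed `a`, the `2^m` columns `{φ_{a,b} : b ∈ 𝔽₂^m}` form an
orthonormal basis of `ℂ^{2^m}`. -/
theorem dgFrame_tight_and_union_of_orthonormal_bases
    (m r : ℕ) (hm : Odd m) (hm0 : 0 < m)
    (ξ : GaloisField 2 m)
    (hξ : LinearIndependent (ZMod 2) fun j : Fin m => ξ ^ (j : ℕ)) :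
    (∀ x y : Fin m → ZMod 2,
        (∑ a : Fin (r + 1) → GaloisField 2 m, ∑ b : Fin m → ZMod 2,
            dgFrameCol ξ r a b x * (starRingEnd ℂ) (dgFrameCol ξ r a b y)) =
          if x = y then (2 : ℂ) ^ ((r + 1) * m) else 0) ∧
      ∀ a : Fin (r + 1) → GaloisField 2 m,
        Orthonormal ℂ (fun b : Fin m → ZMod 2 => toEuc (dgFrameCol ξ r a b)) ∧
          Submodule.span ℂ
              (Set.range fun b : Fin m → ZMod 2 => toEuc (dgFrameCol ξ r a b)) = ⊤ := by
  have hpow : ((2 : ℂ) ^ m) ≠ 0 := pow_ne_zero _ two_ne_zero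
  constructor
  · intro x y
    have hb : ∀ a : Fin (r + 1) → GaloisField 2 m,
        (∑ b : Fin m → ZMod 2,
            dgFrameCol ξ r a b x * (starRingEnd ℂ) (dgFrameCol ξ r a b y)) =
          ((2 : ℂ) ^ m)⁻¹ *
            (zeta (qform (∑ t : Fin (r + 1), Pmat ξ (t : ℕ) (a t)) x -
                qform (∑ t : Fin (r + 1), Pmat ξ (t : ℕ) (a t)) y) *
              (if x + y = 0 then (2 : ℂ) ^ m else 0)) := by
      intro a
      rw [Finset.sum_congr rfl (fun b _ => col_mul_conj ξ r a b x y), ← Finset.mul_sum,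
        ← Finset.mul_sum]
      have hcs := char_sum (x + y)
      simp only [Pi.add_apply] at hcs
      rw [hcs]
    by_cases hxy : x = y
    · subst hxy
      rw [if_pos rfl]
      have : ∀ a : Fin (r + 1) → GaloisField 2 m,
          (∑ b : Fin m → ZMod 2,
              dgFrameCol ξ r a b x * (starRingEnd ℂ) (dgFrameCol ξ r a b x)) = 1 := by
        intro a
        rw [hb a, if_pos ((pi_add_eq_zero_iff x x).mpr rfl), sub_self, zeta_zero, one_mul,
          inv_mul_cancel₀ hpow]
      rw [Finset.sum_congr rfl fun a _ => this a, Finset.sum_const, Finset.card_univ,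
        Fintype.card_fun, Fintype.card_fin, card_GF m hm0, nsmul_eq_mul, mul_one]
      push_cast
      rw [← pow_mul, mul_comm m (r + 1)]
    · rw [if_neg hxy]
      rw [Finset.sum_congr rfl fun a _ => hb a]
      have : ¬(x + y = 0) := fun h => hxy ((pi_add_eq_zero_iff x y).mp h)
      simp [this]
  · intro a
    have hinner : ∀ b b' : Fin m → ZMod 2,
        (inner ℂ (toEuc (dgFrameCol ξ r a b)) (toEuc (dgFrameCol ξ r a b')) : ℂ) =
          if b = b' then 1 else 0 := by
      intro b b'
      rw [PiLp.inner_apply]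
      simp only [RCLike.inner_apply']
      have : ∀ x : Fin m → ZMod 2,
          (starRingEnd ℂ) (toEuc (dgFrameCol ξ r a b) x) * toEuc (dgFrameCol ξ r a b') x =
            ((2 : ℂ) ^ m)⁻¹ * chi (∑ j, x j * (b + b') j) := by
        intro x
        exact conj_col_mul ξ r a b b' x
      rw [Finset.sum_congr rfl fun x _ => this x, ← Finset.mul_sum, char_sum (b + b')]
      by_cases hbb : b = b'
      · rw [if_pos ((pi_add_eq_zero_iff b b').mpr hbb), if_pos hbb, inv_mul_cancel₀ hpow]
      · rw [if_neg (fun h => hbb ((pi_add_eq_zero_iff b b').mp h)), if_neg hbb, mul_zero]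
    have hon : Orthonormal ℂ (fun b : Fin m → ZMod 2 => toEuc (dgFrameCol ξ r a b)) :=
      orthonormal_iff_ite.mpr hinner
    refine ⟨hon, ?_⟩
    refine hon.linearIndependent.span_eq_top_of_card_eq_finrank ?_
    rw [finrank_euclideanSpace]
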